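/- If w : ℝ → ℝ is twice differentiable and satisfies w'' + β w' + α w = 0, and ρ = sqrt(β² - 4α) with β² - 4α > 0, then the function I(ζ) = (2 w'(ζ) + (β + ρ) w(ζ))^(ρ+β) · (2 w'(ζ) + (β - ρ) w(ζ))^(ρ-β) is constant on any interval where both expressions 2w' + (β+ρ)w and 2w' + (β-ρ)w are positive. -/

import Mathlib

theorem stmt_0 (α β : ℝ) (hdisc : β ^ 2 - 4 * α > 0)
    (ρ : ℝ) (hρ : ρ = Real.sqrt (β ^ 2 - 4 * α))
    (w : ℝ → ℝ) (hw : Differentiable ℝ w) (hw' : Differentiable ℝ (deriv w))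
    (heq : ∀ ζ : ℝ, deriv (deriv w) ζ + β * deriv w ζ + α * w ζ = 0)
    (a b : ℝ)
    (hpos : ∀ ζ ∈ Set.Ioo a b,
      0 < 2 * deriv w ζ + (β + ρ) * w ζ ∧ 0 < 2 * deriv w ζ + (β - ρ) * w ζ) :
    ∀ x ∈ Set.Ioo a b, ∀ x' ∈ Set.Ioo a b,
      (2 * deriv w x + (β + ρ) * w x) ^ (ρ + β) *
        (2 * deriv w x + (β - ρ) * w x) ^ (ρ - β)
      = (2 * deriv w x' + (β + ρ) * w x') ^ (ρ + β) *
        (2 * deriv w x' + (β - ρ) * w x') ^ (ρ - β) := by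
  have hρsq : ρ ^ 2 = β ^ 2 - 4 * α := by
    rw [hρ, Real.sq_sqrt hdisc.le]
  set I : ℝ → ℝ := fun ζ =>
    (2 * deriv w ζ + (β + ρ) * w ζ) ^ (ρ + β) *
      (2 * deriv w ζ + (β - ρ) * w ζ) ^ (ρ - β) with hI
  have key : ∀ ζ ∈ Set.Ioo a b, HasDerivAt I 0 ζ := by
    intro ζ hζ
    obtain ⟨hu, hv⟩ := hpos ζ hζ
    set u := 2 * deriv w ζ + (β + ρ) * w ζ
    set v := 2 * deriv w ζ + (β - ρ) * w ζ
    have hw2 : deriv (deriv w) ζ = -β * deriv w ζ - α * w ζ := by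
      have := heq ζ; linarith
    have hdu : HasDerivAt (fun ζ => 2 * deriv w ζ + (β + ρ) * w ζ)
        ((ρ - β) / 2 * u) ζ := by
      have h := (((hw' ζ).hasDerivAt.const_mul 2).add
        ((hw ζ).hasDerivAt.const_mul (β + ρ)))
      refine h.congr_deriv (Eq.symm ?_)
      rw [hw2]
      have : α = (β + ρ) * (β - ρ) / 4 := by nlinarith
      simp only [u]; linear_combination (2 * w ζ) * this
    have hdv : HasDerivAt (fun ζ => 2 * deriv w ζ + (β - ρ) * w ζ)
        (-(ρ + β) / 2 * v) ζ := by
      have h := (((hw' ζ).hasDerivAt.const_mul 2).add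
        ((hw ζ).hasDerivAt.const_mul (β - ρ)))
      refine h.congr_deriv (Eq.symm ?_)
      rw [hw2]
      have : α = (β + ρ) * (β - ρ) / 4 := by nlinarith
      simp only [v]; linear_combination (2 * w ζ) * this
    have h1 := hdu.rpow_const (p := ρ + β) (Or.inl hu.ne')
    have h2 := hdv.rpow_const (p := ρ - β) (Or.inl hv.ne')
    have h := h1.mul h2
    refine h.congr_deriv (Eq.symm ?_)
    have e1 : u ^ (ρ + β - 1) * u = u ^ (ρ + β) := by
      rw [← Real.rpow_add_one hu.ne', sub_add_cancel]
    have e2 : v ^ (ρ - β - 1) * v = v ^ (ρ - β) := by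
      rw [← Real.rpow_add_one hv.ne', sub_add_cancel]
    have : (ρ - β) / 2 * u * (ρ + β) * u ^ (ρ + β - 1) * v ^ (ρ - β) +
        u ^ (ρ + β) * (-(ρ + β) / 2 * v * (ρ - β) * v ^ (ρ - β - 1)) = 0 := by
      have : (ρ - β) / 2 * u * (ρ + β) * u ^ (ρ + β - 1) =
          (ρ - β) * (ρ + β) / 2 * (u ^ (ρ + β - 1) * u) := by ring
      rw [this, e1]
      have : u ^ (ρ + β) * (-(ρ + β) / 2 * v * (ρ - β) * v ^ (ρ - β - 1)) =
          -((ρ - β) * (ρ + β) / 2) * (v ^ (ρ - β - 1) * v) * u ^ (ρ + β) := by ring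
      rw [this, e2]; ring
    exact this.symm
  intro x hx x' hx'
  have hconv : Convex ℝ (Set.Ioo a b) := convex_Ioo a b
  have : ∀ ζ ∈ Set.Ioo a b, fderivWithin ℝ I (Set.Ioo a b) ζ = 0 := by
    intro ζ hζ
    have := ((key ζ hζ).hasFDerivAt.hasFDerivWithinAt).fderivWithin
      (isOpen_Ioo.uniqueDiffOn ζ hζ)
    rw [this]
    ext; simp
  have hdiff : DifferentiableOn ℝ I (Set.Ioo a b) := fun ζ hζ =>
    ((key ζ hζ).differentiableAt).differentiableWithinAt
  exact hconv.is_const_of_fderivWithin_eq_zero hdiff this hx hx'
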